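/- arXiv:1311.5286 — 4 statements merged into one kernel-verified Lean document; each statement's English description precedes it below -/
import Mathlib

section
/- Let S = (S(n))ₙ, S(n) ⊆ (S_n)^g, be closed with respect to direct sums, with each S(n) an open subset of (S_n)^g. Define the matrix convex hull co^mat S by: X ∈ (co^mat S)(n) iff there exist m, Z ∈ S(m), and an isometry V : ℂⁿ → ℂᵐ with X = V*ZV. Then each (co^mat S)(n) is open. -/
open Matrix
open scoped ComplexOrder

noncomputable section

/-- `g`-tuples of `n × n` Hermitian (self-adjoint) complex matrices, with the
norm (product) topology inherited from matrix space. -/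
abbrev HTup (g n : ℕ) := Fin g → selfAdjoint (Matrix (Fin n) (Fin n) ℂ)

/-- if `S` is closed with respect to direct sums and each level `S(n)` is
open, then each level of the matrix convex hull
`co^mat S (n) = {V*ZV : Z ∈ S(m), V : ℂⁿ → ℂᵐ an isometry}` is open. -/
theorem stmt3 {g : ℕ} (S : ∀ n : ℕ, Set (HTup g n))
    (hsum : ∀ m n (X : HTup g m) (Y : HTup g n), X ∈ S m → Y ∈ S n →
      ∀ Z : HTup g (m + n),
        (∀ j, (Z j : Matrix (Fin (m + n)) (Fin (m + n)) ℂ) =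
          (Matrix.fromBlocks (X j : Matrix (Fin m) (Fin m) ℂ) 0 0
            (Y j : Matrix (Fin n) (Fin n) ℂ)).submatrix finSumFinEquiv.symm finSumFinEquiv.symm) →
        Z ∈ S (m + n))
    (hopen : ∀ n, IsOpen (S n)) (n : ℕ) :
    IsOpen {X : HTup g n | ∃ (m : ℕ) (Z : HTup g m), Z ∈ S m ∧
      ∃ V : Matrix (Fin m) (Fin n) ℂ, Vᴴ * V = 1 ∧
        ∀ j, (X j : Matrix (Fin n) (Fin n) ℂ) =
          Vᴴ * (Z j : Matrix (Fin m) (Fin m) ℂ) * V} := by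
  rw [isOpen_iff_mem_nhds]
  rintro X ⟨m, Z, hZ, V, hV, hX⟩
  -- perturbation map: Y ↦ Z + V(Y - X)V*
  have hsa : ∀ (Y : HTup g n) (j : Fin g),
      (Z j : Matrix (Fin m) (Fin m) ℂ) +
        V * ((Y j : Matrix (Fin n) (Fin n) ℂ) - (X j : Matrix (Fin n) (Fin n) ℂ)) * Vᴴ ∈
        selfAdjoint (Matrix (Fin m) (Fin m) ℂ) := by
    intro Y j
    have hZj := (Z j).2
    have hYj := (Y j).2
    have hXj := (X j).2
    simp only [selfAdjoint.mem_iff, _root_.IsSelfAdjoint, star_eq_conjTranspose] at *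
    simp [Matrix.conjTranspose_mul, Matrix.conjTranspose_sub, hZj, hYj, hXj,
      Matrix.mul_assoc, Matrix.sub_mul, Matrix.mul_sub]
  set f : HTup g n → HTup g m := fun Y j =>
    ⟨(Z j : Matrix (Fin m) (Fin m) ℂ) +
      V * ((Y j : Matrix (Fin n) (Fin n) ℂ) - (X j : Matrix (Fin n) (Fin n) ℂ)) * Vᴴ, hsa Y j⟩ with hf
  have hcont : Continuous f := by
    apply continuous_pi
    intro j
    apply Continuous.subtype_mk
    have h1 : Continuous fun Y : HTup g n => (Y j : Matrix (Fin n) (Fin n) ℂ) :=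
      continuous_subtype_val.comp (continuous_apply j)
    exact continuous_const.add ((continuous_const.matrix_mul (h1.sub continuous_const)).matrix_mul
      continuous_const)
  have hfX : f X = Z := by
    funext j
    ext1
    simp [hf]
  have hmem : f ⁻¹' (S m) ∈ nhds X := by
    apply hcont.continuousAt.preimage_mem_nhds
    rw [hfX]
    exact (hopen m).mem_nhds hZ
  refine Filter.mem_of_superset hmem ?_
  intro Y hY
  refine ⟨m, f Y, hY, V, hV, fun j => ?_⟩
  have : Vᴴ * ((f Y j : Matrix (Fin m) (Fin m) ℂ)) * V =
      Vᴴ * (Z j : Matrix (Fin m) (Fin m) ℂ) * V +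
        (Vᴴ * V) * ((Y j : Matrix (Fin n) (Fin n) ℂ) - (X j : Matrix (Fin n) (Fin n) ℂ)) * (Vᴴ * V) := by
    simp [hf, Matrix.mul_add, Matrix.add_mul, Matrix.mul_assoc]
  rw [this, hV, ← hX j]
  simp
end
end

section
/- Let C = (C(n))ₙ be a matrix convex subset of (S_n^g)ₙ and let L(x) = A₀ + Σⱼ Aⱼ xⱼ be a linear pencil with A₀,…,A_g ∈ S_k (k×k Hermitian). If L(X) ⪰ 0 for all X ∈ C(k), then L(X) ⪰ 0 for all n and all X ∈ C(n). -/
open Matrix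
open scoped ComplexOrder Kronecker

noncomputable section

abbrev Tup (g n : ℕ) := Fin g → Matrix (Fin n) (Fin n) ℂ

def dirSum {g m n : ℕ} (X : Tup g m) (Y : Tup g n) : Tup g (m + n) :=
  fun j => (Matrix.fromBlocks (X j) 0 0 (Y j)).submatrix finSumFinEquiv.symm finSumFinEquiv.symm

def conjTup {g m n : ℕ} (V : Matrix (Fin n) (Fin m) ℂ) (X : Tup g n) : Tup g m :=
  fun j => Vᴴ * X j * V

/-- Evaluation of the linear pencil `L(x) = A₀ + Σⱼ Aⱼ xⱼ` at a tuple `X`: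
`L(X) = A₀ ⊗ Iₙ + Σⱼ Aⱼ ⊗ Xⱼ`. -/
def pencilEval {g k n : ℕ} (A₀ : Matrix (Fin k) (Fin k) ℂ)
    (A : Fin g → Matrix (Fin k) (Fin k) ℂ) (X : Tup g n) :
    Matrix (Fin k × Fin n) (Fin k × Fin n) ℂ :=
  A₀ ⊗ₖ (1 : Matrix (Fin n) (Fin n) ℂ) + ∑ j, (A j) ⊗ₖ X j

open Module

lemma kron_conjTranspose {k k' m n : ℕ} (A : Matrix (Fin k) (Fin k') ℂ) (B : Matrix (Fin n) (Fin m) ℂ) :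
    (A ⊗ₖ B)ᴴ = Aᴴ ⊗ₖ Bᴴ := by
  ext ⟨i, j⟩ ⟨i', j'⟩
  simp [conjTranspose_apply, kroneckerMap_apply, star_mul', mul_comm]

lemma qf_conj_eq {p q : Type*} [Fintype p] [Fintype q] (M : Matrix p p ℂ) (B : Matrix p q ℂ)
    (w : q → ℂ) :
    star w ⬝ᵥ (Bᴴ * M * B) *ᵥ w = star (B *ᵥ w) ⬝ᵥ M *ᵥ (B *ᵥ w) := by
  simp only [star_mulVec, dotProduct_mulVec, vecMul_vecMul]

lemma one_kron_mulVec {k N : ℕ} (P : Matrix (Fin N) (Fin N) ℂ) (v : Fin k × Fin N → ℂ)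
    (h : ∀ j, P *ᵥ (fun i => v (j, i)) = fun i => v (j, i)) :
    ((1 : Matrix (Fin k) (Fin k) ℂ) ⊗ₖ P) *ᵥ v = v := by
  funext ji
  obtain ⟨j, i⟩ := ji
  have hh := congrFun (h j) i
  simp only [mulVec, dotProduct] at hh ⊢
  rw [Fintype.sum_prod_type]
  simp only [kroneckerMap_apply, one_apply, ite_mul, one_mul, zero_mul, mul_assoc]
  simpa [Finset.sum_ite_eq, Finset.mem_univ] using hh

lemma pencil_isHermitian {g k n : ℕ} {A₀ : Matrix (Fin k) (Fin k) ℂ}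
    {A : Fin g → Matrix (Fin k) (Fin k) ℂ} (hA₀ : A₀.IsHermitian) (hA : ∀ j, (A j).IsHermitian)
    {X : Tup g n} (hX : ∀ j, (X j).IsHermitian) : (pencilEval A₀ A X).IsHermitian := by
  unfold pencilEval
  apply Matrix.IsHermitian.add
  · show _ = _
    rw [kron_conjTranspose, hA₀.eq, conjTranspose_one]
  · show _ = _
    rw [conjTranspose_sum]
    exact Finset.sum_congr rfl fun j _ => by rw [kron_conjTranspose, (hA j).eq, (hX j).eq]

lemma pencil_conj {g k m n : ℕ} (A₀ : Matrix (Fin k) (Fin k) ℂ)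
    (A : Fin g → Matrix (Fin k) (Fin k) ℂ) (V : Matrix (Fin n) (Fin m) ℂ) (hV : Vᴴ * V = 1)
    (Y : Tup g n) :
    pencilEval A₀ A (conjTup V Y) =
      ((1 : Matrix (Fin k) (Fin k) ℂ) ⊗ₖ V)ᴴ * pencilEval A₀ A Y *
        ((1 : Matrix (Fin k) (Fin k) ℂ) ⊗ₖ V) := by
  have h1 : ((1 : Matrix (Fin k) (Fin k) ℂ) ⊗ₖ V)ᴴ = (1 : Matrix (Fin k) (Fin k) ℂ) ⊗ₖ Vᴴ := by
    rw [kron_conjTranspose, conjTranspose_one]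
  unfold pencilEval conjTup
  rw [h1, Matrix.mul_add, Matrix.add_mul, Matrix.mul_sum, Matrix.sum_mul]
  congr 1
  · rw [← mul_kronecker_mul, ← mul_kronecker_mul, Matrix.one_mul, Matrix.mul_one, Matrix.mul_one,
      hV]
  · exact Finset.sum_congr rfl fun j _ => by
      rw [← mul_kronecker_mul, ← mul_kronecker_mul, Matrix.one_mul, Matrix.mul_one]

lemma exists_isometry {N k : ℕ} (hkN : k ≤ N) (u : Fin k → (Fin N → ℂ)) :
    ∃ V : Matrix (Fin N) (Fin k) ℂ, Vᴴ * V = 1 ∧ ∀ j, (V * Vᴴ) *ᵥ u j = u j := by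
  classical
  set E := EuclideanSpace ℂ (Fin N) with hE
  let u' : Fin k → E := fun j => WithLp.toLp 2 (u j)
  set S : Submodule ℂ E := Submodule.span ℂ (Set.range u') with hS
  have hd : finrank ℂ S ≤ k := by
    simpa [Set.finrank] using finrank_range_le_card u'
  set d := finrank ℂ S with hdd
  let c : OrthonormalBasis (Fin d) ℂ S := stdOrthonormalBasis ℂ S
  let f : Fin N → E := fun i => if h : (i : ℕ) < d then (c ⟨i, h⟩ : E) else 0
  have hcard : finrank ℂ E = Fintype.card (Fin N) := by
    show finrank ℂ (EuclideanSpace ℂ (Fin N)) = _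
    simp [finrank_euclideanSpace]
  have horth : Orthonormal ℂ (({i : Fin N | (i : ℕ) < d}).restrict f) := by
    rw [orthonormal_iff_ite]
    rintro ⟨i, hi⟩ ⟨i', hi'⟩
    have h1 : (({i : Fin N | (i : ℕ) < d}).restrict f) ⟨i, hi⟩ = (c ⟨i, hi⟩ : E) := dif_pos hi
    have h2 : (({i : Fin N | (i : ℕ) < d}).restrict f) ⟨i', hi'⟩ = (c ⟨i', hi'⟩ : E) := dif_pos hi'
    rw [h1, h2, ← Submodule.coe_inner, orthonormal_iff_ite.mp c.orthonormal ⟨i, hi⟩ ⟨i', hi'⟩]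
    congr 1
    simp [Fin.ext_iff, Subtype.ext_iff]
  obtain ⟨b, hb⟩ := horth.exists_orthonormalBasis_extension_of_card_eq hcard
  refine ⟨Matrix.of fun i j => b (Fin.castLE hkN j) i, ?_, ?_⟩
  · ext j j'
    have := (orthonormal_iff_ite.mp b.orthonormal) (Fin.castLE hkN j) (Fin.castLE hkN j')
    rw [PiLp.inner_apply] at this
    simp only [RCLike.inner_apply] at this
    simp only [Matrix.mul_apply, conjTranspose_apply, Matrix.of_apply, Matrix.one_apply]
    calc ∑ i, star (b (Fin.castLE hkN j) i) * b (Fin.castLE hkN j') i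
        = ∑ i, (starRingEnd ℂ) (b (Fin.castLE hkN j) i) * b (Fin.castLE hkN j') i := rfl
      _ = if j = j' then 1 else 0 := by
          simp only [mul_comm] at this ⊢; rw [this]; congr 1; simp [Fin.ext_iff]
  · set V : Matrix (Fin N) (Fin k) ℂ := Matrix.of fun i j => b (Fin.castLE hkN j) i with hV
    have hPx : ∀ x : E, (V * Vᴴ) *ᵥ (fun i => x i) =
        fun i => ∑ j' : Fin k, b (Fin.castLE hkN j') i *
          (inner ℂ (b (Fin.castLE hkN j')) x : ℂ) := by
      intro x
      funext i
      simp only [mulVec, dotProduct, Matrix.mul_apply, conjTranspose_apply, Matrix.of_apply,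
        Finset.sum_mul, hV]
      rw [Finset.sum_comm]
      refine Finset.sum_congr rfl fun j' _ => ?_
      rw [PiLp.inner_apply]
      simp only [RCLike.inner_apply, Finset.mul_sum]
      exact Finset.sum_congr rfl fun i' _ => by simp only [RCLike.star_def]; ring
    have hfix : ∀ j' : Fin k, (V * Vᴴ) *ᵥ (fun i => b (Fin.castLE hkN j') i) =
        fun i => b (Fin.castLE hkN j') i := by
      intro j'
      rw [hPx (b (Fin.castLE hkN j'))]
      funext i
      have : ∀ j'' : Fin k,
          (inner ℂ (b (Fin.castLE hkN j'')) (b (Fin.castLE hkN j')) : ℂ) =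
            if j'' = j' then 1 else 0 := by
        intro j''
        rw [orthonormal_iff_ite.mp b.orthonormal]
        congr 1
        simp [Fin.ext_iff]
      simp only [this, mul_ite, mul_one, mul_zero, Finset.sum_ite_eq', Finset.mem_univ, if_true]
    let Q : E →ₗ[ℂ] E :=
      { toFun := fun x => WithLp.toLp 2 ((V * Vᴴ) *ᵥ (fun i => x i))
        map_add' := fun x y => by
          show WithLp.toLp 2 ((V * Vᴴ) *ᵥ _) = WithLp.toLp 2 ((V * Vᴴ) *ᵥ _) + WithLp.toLp 2 ((V * Vᴴ) *ᵥ _)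
          exact congrArg (WithLp.toLp 2) (Matrix.mulVec_add _ _ _)
        map_smul' := fun a x => by
          show WithLp.toLp 2 ((V * Vᴴ) *ᵥ _) = a • WithLp.toLp 2 ((V * Vᴴ) *ᵥ _)
          exact congrArg (WithLp.toLp 2) (Matrix.mulVec_smul _ _ _) }
    set K : Submodule ℂ E := LinearMap.ker (Q - LinearMap.id) with hK
    have hbK : ∀ j' : Fin k, b (Fin.castLE hkN j') ∈ K := by
      intro j'
      rw [hK, LinearMap.mem_ker, LinearMap.sub_apply, LinearMap.id_apply, sub_eq_zero]
      exact congrArg (WithLp.toLp 2) (hfix j')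
    have hdN : d ≤ N := le_trans hd hkN
    have hbc : ∀ i : Fin d, (c i : E) = b (Fin.castLE hkN (Fin.castLE hd i)) := by
      intro i
      have hmem : (Fin.castLE hkN (Fin.castLE hd i) : Fin N) ∈ {i : Fin N | (i : ℕ) < d} := i.2
      rw [hb _ hmem]
      show _ = f _
      have : f (Fin.castLE hkN (Fin.castLE hd i)) = (c ⟨(i : ℕ), i.2⟩ : E) := dif_pos i.2
      rw [this]
    have hspan : Submodule.span ℂ (Set.range (fun i : Fin d => (c i : E))) = S := by
      have h1 := c.toBasis.span_eq
      have h2 := Submodule.map_span S.subtype (Set.range ⇑c.toBasis)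
      rw [h1] at h2
      rw [Submodule.map_top, Submodule.range_subtype] at h2
      have him : (⇑S.subtype '' Set.range ⇑c.toBasis) =
          Set.range (fun i : Fin d => (c i : E)) := by
        rw [← Set.range_comp]
        ext x
        simp [Function.comp, c.coe_toBasis]
      rw [← him]
      exact h2.symm
    have hSK : S ≤ K := by
      rw [← hspan]
      rw [Submodule.span_le]
      rintro x ⟨i, rfl⟩
      show (c i : E) ∈ K
      rw [hbc i]
      exact hbK _
    intro j
    have hu : u' j ∈ K := hSK (Submodule.subset_span (Set.mem_range_self j))
    rw [hK, LinearMap.mem_ker, LinearMap.sub_apply, LinearMap.id_apply, sub_eq_zero] at hu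
    exact congrArg WithLp.ofLp hu

lemma psd_of_isEmpty {p : Type*} [Fintype p] [IsEmpty p] (M : Matrix p p ℂ) : M.PosSemidef := by
  refine ⟨Subsingleton.elim _ _, fun x => ?_⟩
  have h0 : star x ⬝ᵥ M *ᵥ x = 0 := by simp [dotProduct]
  rw [Subsingleton.elim x 0]; simp


/-- a size-`k` linear pencil positive semidefinite on level `k` of a matrix
convex set `C` is positive semidefinite on every level of `C`. -/
theorem stmt6 {g k : ℕ} (C : ∀ n : ℕ, Set (Tup g n))
    (hherm : ∀ n, ∀ X ∈ C n, ∀ j, (X j).IsHermitian)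
    (hsum : ∀ m n (X : Tup g m) (Y : Tup g n), X ∈ C m → Y ∈ C n → dirSum X Y ∈ C (m + n))
    (hisom : ∀ m n (V : Matrix (Fin n) (Fin m) ℂ), Vᴴ * V = 1 →
      ∀ X ∈ C n, conjTup V X ∈ C m)
    (A₀ : Matrix (Fin k) (Fin k) ℂ) (A : Fin g → Matrix (Fin k) (Fin k) ℂ)
    (hA₀ : A₀.IsHermitian) (hA : ∀ j, (A j).IsHermitian)
    (hk : ∀ X ∈ C k, (pencilEval A₀ A X).PosSemidef) :
    ∀ n, ∀ X ∈ C n, (pencilEval A₀ A X).PosSemidef := by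
  have hlev : ∀ N, k ≤ N → ∀ Z ∈ C N, (pencilEval A₀ A Z).PosSemidef := by
    intro N hkN Z hZ
    refine .of_dotProduct_mulVec_nonneg (pencil_isHermitian hA₀ hA (hherm N Z hZ)) fun v => ?_
    obtain ⟨V, hVV, hP⟩ := exists_isometry hkN (fun j i => v (j, i))
    have hY := hk (conjTup V Z) (hisom k N V hVV Z hZ)
    set B := (1 : Matrix (Fin k) (Fin k) ℂ) ⊗ₖ V with hB
    have hq := hY.dotProduct_mulVec_nonneg (Bᴴ *ᵥ v)
    rw [pencil_conj A₀ A V hVV Z, ← hB, qf_conj_eq] at hq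
    have hBv : B *ᵥ (Bᴴ *ᵥ v) = v := by
      rw [Matrix.mulVec_mulVec]
      have hBB : B * Bᴴ = (1 : Matrix (Fin k) (Fin k) ℂ) ⊗ₖ (V * Vᴴ) := by
        rw [hB, kron_conjTranspose, conjTranspose_one, ← mul_kronecker_mul, Matrix.one_mul]
      rw [hBB]
      exact one_kron_mulVec _ v hP
    rwa [hBv] at hq
  intro n X hX
  rcases Nat.eq_zero_or_pos n with hn | hn
  · subst hn
    exact psd_of_isEmpty _
  · have copies : ∀ m : ℕ, ∃ N, m ≤ N ∧ ∃ Z ∈ C N, ∃ W : Matrix (Fin N) (Fin n) ℂ,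
        Wᴴ * W = 1 ∧ conjTup W Z = X := by
      intro m
      induction m with
      | zero =>
        refine ⟨n, Nat.zero_le n, X, hX, 1, by simp, ?_⟩
        funext j
        simp [conjTup]
      | succ m ih =>
        obtain ⟨N, hN, Z, hZ, W, hW, hWX⟩ := ih
        refine ⟨n + N, by omega, dirSum X Z, hsum _ _ _ _ hX hZ,
          (Matrix.fromRows (0 : Matrix (Fin n) (Fin n) ℂ) W).submatrix finSumFinEquiv.symm id,
          ?_, ?_⟩
        · rw [conjTranspose_submatrix, Matrix.submatrix_mul_equiv,
            conjTranspose_fromRows_eq_fromCols_conjTranspose, fromCols_mul_fromRows]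
          simp [hW]
        · funext j
          show ((Matrix.fromRows (0 : Matrix (Fin n) (Fin n) ℂ) W).submatrix
              finSumFinEquiv.symm id)ᴴ *
              ((Matrix.fromBlocks (X j) 0 0 (Z j)).submatrix finSumFinEquiv.symm
                finSumFinEquiv.symm) *
              ((Matrix.fromRows (0 : Matrix (Fin n) (Fin n) ℂ) W).submatrix
                finSumFinEquiv.symm id) = X j
          rw [conjTranspose_submatrix, Matrix.submatrix_mul_equiv, Matrix.submatrix_mul_equiv,
            Matrix.submatrix_id_id, conjTranspose_fromRows_eq_fromCols_conjTranspose,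
            fromCols_mul_fromBlocks, fromCols_mul_fromRows]
          have hj := congrFun hWX j
          simp only [conjTup] at hj
          simpa [Matrix.conjTranspose_zero, Matrix.zero_mul, Matrix.mul_zero, Matrix.add_mul,
            Matrix.mul_assoc] using hj
    obtain ⟨N, hkN, Z, hZ, W, hW, hWX⟩ := copies k
    have hZpsd := hlev N hkN Z hZ
    have hconj := pencil_conj A₀ A W hW Z
    rw [hWX] at hconj
    rw [hconj]
    exact hZpsd.conjTranspose_mul_mul_same _
end
end

section
/- Let L(x) = A₀ + Σⱼ Aⱼ xⱼ be a linear pencil with Hermitian coefficients and let ℓ(x) = c₀ + Σⱼ cⱼ xⱼ be a real affine linear function. Then ℓ ≥ 0 on the scalar spectrahedron D_L(1) = {x ∈ ℝ^g : L(x) ⪰ 0} if and only if ℓ(X) := c₀ I + Σⱼ cⱼ Xⱼ ⪰ 0 for every n and every X ∈ D_L(n) = {X ∈ (S_n)^g : L(X) ⪰ 0}. -/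
open Matrix
open scoped ComplexOrder Kronecker

noncomputable section

lemma kron_quad {k n : ℕ} (A : Matrix (Fin k) (Fin k) ℂ) (X : Matrix (Fin n) (Fin n) ℂ)
    (w : Fin k → ℂ) (v : Fin n → ℂ) :
    star (fun p : Fin k × Fin n => w p.1 * v p.2) ⬝ᵥ
      ((A ⊗ₖ X) *ᵥ fun p : Fin k × Fin n => w p.1 * v p.2)
    = (star w ⬝ᵥ A *ᵥ w) * (star v ⬝ᵥ X *ᵥ v) := by
  simp only [dotProduct]
  rw [Finset.sum_mul_sum]
  simp only [mulVec, dotProduct, kroneckerMap_apply, Pi.star_apply, Fintype.sum_prod_type]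
  apply Finset.sum_congr rfl; intro i _
  apply Finset.sum_congr rfl; intro a _
  simp only [Finset.mul_sum, Finset.sum_mul, star_mul']
  rw [Finset.sum_comm]
  apply Finset.sum_congr rfl; intro j _
  apply Finset.sum_congr rfl; intro b _
  ring

lemma herm_quad_real {m : Type*} [Fintype m] {M : Matrix m m ℂ} (hM : M.IsHermitian)
    (v : m → ℂ) : ((star v ⬝ᵥ M *ᵥ v).re : ℂ) = star v ⬝ᵥ M *ᵥ v := by
  rw [← Complex.conj_eq_iff_re]
  calc (starRingEnd ℂ) (star v ⬝ᵥ M *ᵥ v) = star (star v ⬝ᵥ M *ᵥ v) := rfl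
    _ = star (M *ᵥ v) ⬝ᵥ v := by rw [star_dotProduct]; simp [dotProduct_comm]
    _ = star v ⬝ᵥ M *ᵥ v := by rw [star_mulVec, ← dotProduct_mulVec, hM.eq]

lemma quad_sum {m ι : Type*} [Fintype m] (s : Finset ι) (f : ι → Matrix m m ℂ) (v : m → ℂ) :
    star v ⬝ᵥ (∑ i ∈ s, f i) *ᵥ v = ∑ i ∈ s, star v ⬝ᵥ (f i) *ᵥ v := by
  classical
  induction s using Finset.induction with
  | empty => simp
  | insert _ _ h ih => simp [Finset.sum_insert h, add_mulVec, dotProduct_add, ih]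

lemma isHermitian_sum' {m ι : Type*} (s : Finset ι) (f : ι → Matrix m m ℂ)
    (hf : ∀ i ∈ s, (f i).IsHermitian) : (∑ i ∈ s, f i).IsHermitian := by
  classical
  induction s using Finset.induction with
  | empty => simp [Matrix.isHermitian_zero]
  | @insert a s h ih =>
      rw [Finset.sum_insert h]
      exact ((hf a (s.mem_insert_self a)).add
        (ih fun i hi => hf i (Finset.mem_insert_of_mem hi)))

lemma smul_herm {m : Type*} {M : Matrix m m ℂ} (hM : M.IsHermitian) (r : ℝ) :
    ((r : ℂ) • M).IsHermitian := by
  rw [Matrix.IsHermitian, conjTranspose_smul, hM.eq, Complex.star_def, Complex.conj_ofReal]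

lemma sum_kron {ι : Type*} {k n : ℕ} (s : Finset ι) (f : ι → Matrix (Fin k) (Fin k) ℂ)
    (B : Matrix (Fin n) (Fin n) ℂ) :
    (∑ i ∈ s, f i) ⊗ₖ B = ∑ i ∈ s, (f i) ⊗ₖ B := by
  classical
  induction s using Finset.induction with
  | empty => simp [Matrix.zero_kronecker]
  | insert _ _ h ih => rw [Finset.sum_insert h, Finset.sum_insert h, Matrix.add_kronecker, ih]

/-- an affine linear function `ℓ(x) = c₀ + Σⱼ cⱼxⱼ` is nonnegative on the
scalar spectrahedron `D_L(1)` iff `ℓ(X) ⪰ 0` for every `X` in the free spectrahedron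
`D_L(n)`, for all `n`. -/
theorem stmt7 {g k : ℕ} (A₀ : Matrix (Fin k) (Fin k) ℂ)
    (A : Fin g → Matrix (Fin k) (Fin k) ℂ)
    (hA₀ : A₀.IsHermitian) (hA : ∀ j, (A j).IsHermitian)
    (c₀ : ℝ) (c : Fin g → ℝ) :
    (∀ x : Fin g → ℝ, (A₀ + ∑ j, (x j : ℂ) • A j).PosSemidef → 0 ≤ c₀ + ∑ j, c j * x j) ↔
    (∀ n (X : Tup g n), (∀ j, (X j).IsHermitian) → (pencilEval A₀ A X).PosSemidef →
      ((c₀ : ℂ) • (1 : Matrix (Fin n) (Fin n) ℂ) + ∑ j, (c j : ℂ) • X j).PosSemidef) := by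
  constructor
  · -- hard direction
    intro h1 n X hX hL
    have hMh : ((c₀ : ℂ) • (1 : Matrix (Fin n) (Fin n) ℂ) + ∑ j, (c j : ℂ) • X j).IsHermitian :=
      (smul_herm isHermitian_one c₀).add
        (isHermitian_sum' _ _ fun j _ => smul_herm (hX j) (c j))
    refine posSemidef_iff_dotProduct_mulVec.mpr ⟨hMh, fun u => ?_⟩
    by_cases hu : u = 0
    · simp [hu]
    set s : Fin g → ℝ := fun j => (star u ⬝ᵥ X j *ᵥ u).re with hsdef
    have hs : ∀ j, ((s j : ℝ) : ℂ) = star u ⬝ᵥ X j *ᵥ u := fun j => herm_quad_real (hX j) u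
    set t : ℝ := (star u ⬝ᵥ u).re with htdef
    have ht : ((t : ℝ) : ℂ) = star u ⬝ᵥ u := by
      simpa [one_mulVec] using herm_quad_real (isHermitian_one : (1 : Matrix (Fin n) (Fin n) ℂ).IsHermitian) u
    have htpos : 0 < t := by
      have h0 : 0 < star u ⬝ᵥ u := Matrix.dotProduct_star_self_pos_iff.mpr hu
      rw [← ht, Complex.zero_lt_real] at h0
      exact h0
    have key : ∀ w : Fin k → ℂ,
        0 ≤ (star w ⬝ᵥ A₀ *ᵥ w).re * t + ∑ j, (star w ⬝ᵥ A j *ᵥ w).re * s j := by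
      intro w
      have h2 := hL.dotProduct_mulVec_nonneg (fun p : Fin k × Fin n => w p.1 * u p.2)
      have e : star (fun p : Fin k × Fin n => w p.1 * u p.2) ⬝ᵥ
          (pencilEval A₀ A X *ᵥ fun p : Fin k × Fin n => w p.1 * u p.2)
          = (((star w ⬝ᵥ A₀ *ᵥ w).re * t + ∑ j, (star w ⬝ᵥ A j *ᵥ w).re * s j : ℝ) : ℂ) := by
        rw [pencilEval, add_mulVec, dotProduct_add, quad_sum, kron_quad]
        push_cast
        congr 1
        · rw [one_mulVec, herm_quad_real hA₀ w, ht]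
        · rw [Finset.sum_congr rfl fun j (_ : j ∈ Finset.univ) => kron_quad (A j) (X j) w u]
          apply Finset.sum_congr rfl; intro j _
          rw [herm_quad_real (hA j) w, hs j]
      rw [e, Complex.zero_le_real] at h2
      exact h2
    set x : Fin g → ℝ := fun j => s j / t with hxdef
    have hN : (A₀ + ∑ j, (x j : ℂ) • A j).PosSemidef := by
      refine posSemidef_iff_dotProduct_mulVec.mpr ⟨?_, ?_⟩
      · exact hA₀.add (isHermitian_sum' _ _ fun j _ => smul_herm (hA j) (x j))
      · intro w
        have e : star w ⬝ᵥ (A₀ + ∑ j, (x j : ℂ) • A j) *ᵥ w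
            = (((star w ⬝ᵥ A₀ *ᵥ w).re + ∑ j, x j * (star w ⬝ᵥ A j *ᵥ w).re : ℝ) : ℂ) := by
          rw [add_mulVec, dotProduct_add, quad_sum]
          push_cast
          congr 1
          · rw [herm_quad_real hA₀ w]
          · apply Finset.sum_congr rfl; intro j _
            rw [smul_mulVec, dotProduct_smul, smul_eq_mul, herm_quad_real (hA j) w]
        rw [e, Complex.zero_le_real]
        have heq : (star w ⬝ᵥ A₀ *ᵥ w).re + ∑ j, x j * (star w ⬝ᵥ A j *ᵥ w).re
            = ((star w ⬝ᵥ A₀ *ᵥ w).re * t + ∑ j, (star w ⬝ᵥ A j *ᵥ w).re * s j) / t := by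
          rw [add_div, Finset.sum_div, mul_div_assoc, div_self (ne_of_gt htpos), mul_one]
          congr 1
          apply Finset.sum_congr rfl; intro j _
          rw [hxdef]
          field_simp
        rw [heq]
        exact div_nonneg (key w) htpos.le
    have h3 := h1 x hN
    have e2 : star u ⬝ᵥ ((c₀ : ℂ) • (1 : Matrix (Fin n) (Fin n) ℂ) + ∑ j, (c j : ℂ) • X j) *ᵥ u
        = ((c₀ * t + ∑ j, c j * s j : ℝ) : ℂ) := by
      rw [add_mulVec, dotProduct_add, quad_sum]
      push_cast
      congr 1
      · rw [smul_mulVec, dotProduct_smul, smul_eq_mul, one_mulVec, ht]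
      · apply Finset.sum_congr rfl; intro j _
        rw [smul_mulVec, dotProduct_smul, smul_eq_mul, hs j]
    rw [e2, Complex.zero_le_real]
    have heq2 : c₀ * t + ∑ j, c j * s j = (c₀ + ∑ j, c j * x j) * t := by
      rw [add_mul, Finset.sum_mul]
      congr 1
      apply Finset.sum_congr rfl; intro j _
      rw [hxdef]
      field_simp
    rw [heq2]
    exact mul_nonneg h3 htpos.le
  · -- easy direction
    intro h2 x hx
    set X : Tup g 1 := fun j => (x j : ℂ) • 1 with hXdef
    have hXh : ∀ j, (X j).IsHermitian := fun j => smul_herm isHermitian_one (x j)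
    have hPE : pencilEval A₀ A X
        = (A₀ + ∑ j, (x j : ℂ) • A j) ⊗ₖ (1 : Matrix (Fin 1) (Fin 1) ℂ) := by
      rw [pencilEval, add_kronecker, sum_kron]
      congr 1
      apply Finset.sum_congr rfl; intro j _
      rw [hXdef, kronecker_smul, smul_kronecker]
    have hPSD : (pencilEval A₀ A X).PosSemidef := by
      rw [hPE]
      refine posSemidef_iff_dotProduct_mulVec.mpr ⟨?_, ?_⟩
      · rw [Matrix.IsHermitian]
        ext ⟨i, a⟩ ⟨j, b⟩
        simp only [conjTranspose_apply, kroneckerMap_apply, Subsingleton.elim a b,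
          Matrix.one_apply_eq, mul_one, star_mul', star_one, one_mul]
        exact hx.1.apply i j
      · intro u
        have hu : u = fun p : Fin k × Fin 1 =>
            (fun i => u (i, 0)) p.1 * (fun _ : Fin 1 => (1 : ℂ)) p.2 := by
          funext p
          obtain ⟨i, a⟩ := p
          simp [Subsingleton.elim a 0]
        rw [hu]
        have hk := kron_quad (A₀ + ∑ j, (x j : ℂ) • A j) (1 : Matrix (Fin 1) (Fin 1) ℂ)
          (fun i => u (i, 0)) (fun _ => (1 : ℂ))
        have e1 : star (fun _ : Fin 1 => (1 : ℂ)) ⬝ᵥ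
            ((1 : Matrix (Fin 1) (Fin 1) ℂ) *ᵥ fun _ => 1) = 1 := by
          simp [dotProduct, one_mulVec]
        refine le_of_le_of_eq ?_ hk.symm
        rw [e1, mul_one]
        exact hx.dotProduct_mulVec_nonneg _
    have h5 := (h2 1 X hXh hPSD).dotProduct_mulVec_nonneg (fun _ => (1 : ℂ))
    have e : star (fun _ : Fin 1 => (1 : ℂ)) ⬝ᵥ
        (((c₀ : ℂ) • (1 : Matrix (Fin 1) (Fin 1) ℂ) + ∑ j, (c j : ℂ) • X j) *ᵥ fun _ => 1)
        = ((c₀ + ∑ j, c j * x j : ℝ) : ℂ) := by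
      rw [add_mulVec, dotProduct_add, quad_sum]
      push_cast
      congr 1
      · simp [smul_mulVec, dotProduct_smul, one_mulVec, dotProduct]
      · apply Finset.sum_congr rfl; intro j _
        simp only [hXdef, smul_mulVec, dotProduct_smul, one_mulVec, smul_eq_mul,
          dotProduct, Finset.univ_unique, Finset.sum_singleton, Pi.star_apply, star_one,
          one_mul, mul_one]
        simp [Pi.smul_apply, smul_eq_mul]
    rw [e, Complex.zero_le_real] at h5
    exact h5
end
end

section
/- Let q(x,y,z) = y x² y + z x² z − 1 (symmetric free polynomial in three symmetric variables), and let S = {X : ∃ Y, Z Hermitian of the same size with q(X,Y,Z) ⪰ 0} be the projection of D_q onto the x-variable. Then I₃ ⊕ 0₃ (the 6×6 matrix with identity and zero 3×3 blocks) belongs to S(6), but the 3×3 zero matrix 0₃ does not belong to S(3). Hence S is not closed under restriction to reducing subspaces. -/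
open Matrix
open scoped ComplexOrder

noncomputable section

/-- Evaluation of `q(x,y,z) = y x² y + z x² z − 1`. -/
def qEval {n : ℕ} (X Y Z : Matrix (Fin n) (Fin n) ℂ) : Matrix (Fin n) (Fin n) ℂ :=
  Y * X * X * Y + Z * X * X * Z - 1

/-- The matrix `I₃ ⊕ 0₃`. -/
def X₀ : Matrix (Fin 6) (Fin 6) ℂ :=
  Matrix.diagonal (fun i => if (i : ℕ) < 3 then 1 else 0)

/-- The partial isometry exchanging the two 3-dimensional blocks. -/
def Zswap : Matrix (Fin 6) (Fin 6) ℂ :=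
  Matrix.of fun i j => if (i : ℕ) + 3 = (j : ℕ) ∨ (j : ℕ) + 3 = (i : ℕ) then 1 else 0

lemma Zswap_herm : Zswap.IsHermitian := by
  ext i j
  simp only [Zswap, Matrix.conjTranspose_apply, Matrix.of_apply]
  split_ifs with h1 h2 <;> simp_all

set_option maxHeartbeats 1000000 in
lemma qEval_X₀ : qEval X₀ 1 Zswap = 0 := by
  rw [qEval]
  ext i j
  fin_cases i <;> fin_cases j <;>
    simp [X₀, Zswap, Matrix.mul_apply, Fin.sum_univ_six, Matrix.one_apply, Matrix.diagonal,
      show ((0:Fin 6):ℕ)=0 from rfl, show ((1:Fin 6):ℕ)=1 from rfl,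
      show ((2:Fin 6):ℕ)=2 from rfl, show ((3:Fin 6):ℕ)=3 from rfl,
      show ((4:Fin 6):ℕ)=4 from rfl, show ((5:Fin 6):ℕ)=5 from rfl]

/-- `I₃ ⊕ 0₃` lies in the projection `S` of `D_q` onto the `x`-variable,
but `0₃` does not; hence `S` is not closed under restriction to reducing subspaces. -/
theorem stmt9 :
    (∃ Y Z : Matrix (Fin 6) (Fin 6) ℂ, Y.IsHermitian ∧ Z.IsHermitian ∧
      (qEval X₀ Y Z).PosSemidef) ∧
    ¬ (∃ Y Z : Matrix (Fin 3) (Fin 3) ℂ, Y.IsHermitian ∧ Z.IsHermitian ∧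
      (qEval (0 : Matrix (Fin 3) (Fin 3) ℂ) Y Z).PosSemidef) := by
  constructor
  · exact ⟨1, Zswap, Matrix.isHermitian_one, Zswap_herm,
      qEval_X₀ ▸ Matrix.PosSemidef.zero⟩
  · rintro ⟨Y, Z, _, _, h⟩
    have hq : qEval (0 : Matrix (Fin 3) (Fin 3) ℂ) Y Z = -1 := by
      simp [qEval]
    rw [hq] at h
    have h2 := h.dotProduct_mulVec_nonneg (fun _ => 1)
    simp [dotProduct, Matrix.mulVec, Fin.sum_univ_three, Matrix.one_apply] at h2
    rw [Complex.le_def] at h2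
    norm_num at h2
end
end
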